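/- Let Δ = (C, δ) be a building of type (W, S), let (d_0, …, d_k) be a minimal gallery and c a chamber. Let Σ be an apartment containing c, d_0, …, d_{k-1}, and suppose no apartment contains c, d_0, …, d_k. Let e ∈ Σ with δ(d_{k-1}, e) = δ(d_{k-1}, d_k), and let α be the unique root of Σ containing d_{k-1} but not e. Then c ∉ α. -/

import Mathlib

noncomputable section
open Classical

namespace BldgPaper

variable {B W : Type*} [Group W] {M : CoxeterMatrix B}

/-- `(W,S)` is 2-complete: `2 < m_{st} < ∞` for all distinct `s,t` (entry `0` codes `∞`). -/
def TwoComplete (M : CoxeterMatrix B) : Prop := ∀ i j : B, i ≠ j → 2 < M i j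

/-- `(W,S)` is `Ã₂`-free: no three distinct generators have all pairwise orders equal to `3`. -/
def A2TildeFree (M : CoxeterMatrix B) : Prop :=
  ∀ i j k : B, i ≠ j → j ≠ k → i ≠ k → ¬ (M i j = 3 ∧ M j k = 3 ∧ M i k = 3)

variable (cs : CoxeterSystem M W) {C : Type*} (δ : C → C → W)

/-- The W-metric building axioms for a distance function `δ` on a set of chambers. -/
structure IsBuilding : Prop where
  nonempty : Nonempty C
  eq_one_iff : ∀ x y, δ x y = 1 ↔ x = y
  step : ∀ x y z (i : B), δ y z = cs.simple i → δ x z = δ x y ∨ δ x z = δ x y * cs.simple i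
  step_of_length : ∀ x y z (i : B), δ y z = cs.simple i →
      cs.length (δ x y * cs.simple i) = cs.length (δ x y) + 1 → δ x z = δ x y * cs.simple i
  exists_step : ∀ x y (i : B), ∃ z, δ y z = cs.simple i ∧ δ x z = δ x y * cs.simple i

/-- The standard parabolic subgroup `⟨J⟩`. -/
def parab (J : Set B) : Subgroup W := Subgroup.closure (cs.simple '' J)

/-- The `J`-residue of the chamber `x`. -/
def residue (J : Set B) (x : C) : Set C := {y | δ x y ∈ parab cs J}

def IsResidue (R : Set C) : Prop := ∃ (J : Set B) (x : C), R = residue cs δ J x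

def IsPanel (R : Set C) : Prop := ∃ (i : B) (x : C), R = residue cs δ {i} x

/-- A spherical residue of rank 2. -/
def IsSphRank2 (R : Set C) : Prop :=
  ∃ (i j : B) (x : C), i ≠ j ∧ (parab cs {i, j} : Set W).Finite ∧ R = residue cs δ {i, j} x

/-- `g` is the gate (projection) of `c` onto the set `R`. -/
def IsGate (R : Set C) (c g : C) : Prop :=
  g ∈ R ∧ ∀ y ∈ R, cs.length (δ c y) = cs.length (δ c g) + cs.length (δ g y)

/-- The projection `proj_R c` of a chamber onto a residue (the gate). -/
noncomputable def proj (R : Set C) (c : C) : C :=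
  if h : ∃ g, IsGate cs δ R c g then h.choose else c

/-- `proj_R T = { proj_R t | t ∈ T }`. -/
def projSet (R T : Set C) : Set C := proj cs δ R '' T

/-- Two residues are parallel if they project onto each other. -/
def Parallel (R T : Set C) : Prop :=
  projSet cs δ R T = R ∧ projSet cs δ T R = T

/-- An apartment: a nonempty, convex and thin set of chambers. -/
def IsApartment (A : Set C) : Prop :=
  A.Nonempty ∧
  (∀ P : Set C, IsPanel cs δ P → (P ∩ A).Nonempty → ∀ c ∈ A, proj cs δ P c ∈ A) ∧
  (∀ P : Set C, IsPanel cs δ P → (P ∩ A).Nonempty → (P ∩ A).ncard = 2)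

/-- A root of the apartment `A`: a subset isometric to a half-space `α_i` of `W`. -/
def IsRootOf (A α : Set C) : Prop :=
  α ⊆ A ∧ ∃ (i : B) (f : C → W),
    Set.BijOn f α {w : W | cs.length w < cs.length (cs.simple i * w)} ∧
    ∀ x ∈ α, ∀ y ∈ α, δ x y = (f x)⁻¹ * f y

/-- `x` and `y` are opposite in the (spherical) residue `R`:
their distance has maximal length among chambers of `R`. -/
def OppChambersIn (R : Set C) (x y : C) : Prop :=
  x ∈ R ∧ y ∈ R ∧ ∀ z ∈ R, cs.length (δ x z) ≤ cs.length (δ x y)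

/-- The residues `P` and `Q` are opposite in `R`. -/
def OppResiduesIn (R P Q : Set C) : Prop :=
  P ⊆ R ∧ Q ⊆ R ∧ ∀ p ∈ P, ∃ q ∈ Q, OppChambersIn cs δ R p q

/-- `(P 0, …, P m)` is a compatible path of panels, where for `1 ≤ i ≤ m` the
set `R i` is the unique rank-2 spherical residue `R(P (i-1), P i)` in which the
consecutive panels `P (i-1)` and `P i` are opposite. -/
def IsCompatiblePath (m : ℕ) (P : ℕ → Set C) (R : ℕ → Set C) : Prop :=
  (∀ i ≤ m, IsPanel cs δ (P i)) ∧
  ∀ i, 1 ≤ i → i ≤ m →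
    IsSphRank2 cs δ (R i) ∧ OppResiduesIn cs δ (R i) (P (i-1)) (P i) ∧
    projSet cs δ (R i) (P 0) = P (i-1)

/-- A triangle: three pairwise distinct rank-2 spherical residues whose mutual
projections are panels (T1), such that the two panels obtained by projecting onto any
one of them are not parallel (T2). -/
def IsTriangle (R₁ R₂ R₃ : Set C) : Prop :=
  R₁ ≠ R₂ ∧ R₂ ≠ R₃ ∧ R₁ ≠ R₃ ∧
  IsSphRank2 cs δ R₁ ∧ IsSphRank2 cs δ R₂ ∧ IsSphRank2 cs δ R₃ ∧
  IsPanel cs δ (projSet cs δ R₁ R₂) ∧ IsPanel cs δ (projSet cs δ R₂ R₁) ∧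
  IsPanel cs δ (projSet cs δ R₁ R₃) ∧ IsPanel cs δ (projSet cs δ R₃ R₁) ∧
  IsPanel cs δ (projSet cs δ R₂ R₃) ∧ IsPanel cs δ (projSet cs δ R₃ R₂) ∧
  ¬ Parallel cs δ (projSet cs δ R₁ R₂) (projSet cs δ R₁ R₃) ∧
  ¬ Parallel cs δ (projSet cs δ R₂ R₁) (projSet cs δ R₂ R₃) ∧
  ¬ Parallel cs δ (projSet cs δ R₃ R₁) (projSet cs δ R₃ R₂)

/-! Coxeter complex notions: the building `(W, δW)` with `δW x y = x⁻¹ * y`. -/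

/-- The distance function of the Coxeter complex `Σ(W,S)`. -/
def δW : W → W → W := fun x y => x⁻¹ * y

/-- The half-space `α_i = {w | ℓ(s_i w) > ℓ(w)}`. -/
def halfspace (i : B) : Set W := {v | cs.length v < cs.length (cs.simple i * v)}

/-- The root `w · α_i` of `(W,S)`. -/
def rootW (w : W) (i : B) : Set W := (w * ·) '' halfspace cs i

/-- `α` is a root with associated reflection `t`. -/
def IsRootPair (α : Set W) (t : W) : Prop :=
  ∃ (w : W) (i : B), α = rootW cs w i ∧ t = w * cs.simple i * w⁻¹

/-- `R` belongs to `∂²α` for a root with reflection `t`: it is a spherical rank-2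
residue of the Coxeter complex stabilized by `t`. -/
def MemBd2 (t : W) (R : Set W) : Prop :=
  IsSphRank2 cs (δW (W := W)) R ∧ (t * ·) '' R = R

/-- `{α 0, α 1, α 2}` (with reflections `t 0, t 1, t 2`) is a combinatorial triangle. -/
def IsCombTriangle (α : Fin 3 → Set W) (t : Fin 3 → W) : Prop :=
  (∀ a, IsRootPair cs (α a) (t a)) ∧
  (∀ a b, a ≠ b → t a ≠ t b) ∧
  (∀ a b : Fin 3, IsOfFinOrder (t a * t b)) ∧
  (¬ ∃ R : Set W, ∀ a, MemBd2 cs (t a) R) ∧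
  (∀ a b c : Fin 3, a ≠ b → b ≠ c → a ≠ c →
    ∃ σ : Set W, MemBd2 cs (t b) σ ∧ MemBd2 cs (t c) σ ∧ σ ⊆ α a)


/-- A (type-preserving) automorphism of the building. -/
def IsAutom (g : Equiv.Perm C) : Prop := ∀ x y, δ (g x) (g y) = δ x y

/-- The simple root `α_i` of the apartment `A` determined by the base chamber `c`. -/
def simpleRootAt (A : Set C) (c : C) (i : B) : Set C :=
  {x ∈ A | cs.length (δ c x) < cs.length (cs.simple i * δ c x)}

/-- `U` is the root group associated with the root `α`: its elements are automorphisms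
fixing pointwise every panel meeting `α` in at least two chambers, and it acts simply
transitively on `P \ α` for every panel `P` meeting `α` in exactly one chamber. -/
def IsRootGroup (α : Set C) (U : Subgroup (Equiv.Perm C)) : Prop :=
  (∀ g ∈ U, IsAutom δ g) ∧
  (∀ g ∈ U, ∀ P : Set C, IsPanel cs δ P → 2 ≤ (P ∩ α).ncard → ∀ x ∈ P, g x = x) ∧
  (∀ P : Set C, IsPanel cs δ P → (P ∩ α).ncard = 1 →
    ∀ x ∈ P \ α, ∀ y ∈ P \ α, ∃! g : Equiv.Perm C, g ∈ U ∧ g x = y)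

/-- Opposite chambers in a spherical building: their distance has maximal length in `W`. -/
def OppositeChambers (x y : C) : Prop := ∀ u : W, cs.length u ≤ cs.length (δ x y)

/-- Opposite panels in a spherical building. -/
def OppositePanels (P Q : Set C) : Prop :=
  (∀ p ∈ P, ∃ q ∈ Q, OppositeChambers cs δ p q) ∧
  (∀ q ∈ Q, ∃ p ∈ P, OppositeChambers cs δ q p)





/-! ### Auxiliary machinery for Statement 5 -/

set_option linter.unusedSectionVars false

set_option maxHeartbeats 1000000

section CoxAux


lemma simple_inv (i : B) : (cs.simple i)⁻¹ = cs.simple i := by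
  rw [inv_eq_iff_mul_eq_one]; exact cs.simple_mul_simple_self i

private lemma flip_eq (c : Prop) [Decidable c] (e : ℤˣ) :
    (if c then -e else e) = e * (if c then (-1:ℤˣ) else 1) := by
  split <;> simp

private def etaFun (i : B) : W × ℤˣ → W × ℤˣ :=
  fun p => (cs.simple i * p.1 * cs.simple i, if p.1 = cs.simple i then -p.2 else p.2)

private lemma etaFun_invol (i : B) : Function.Involutive (etaFun cs i) := by
  intro p
  have hs : cs.simple i * cs.simple i = 1 := cs.simple_mul_simple_self i
  have h1 : ∀ x : W, cs.simple i * (cs.simple i * x * cs.simple i) * cs.simple i = x := by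
    intro x
    calc cs.simple i * (cs.simple i * x * cs.simple i) * cs.simple i
        = (cs.simple i * cs.simple i) * x * (cs.simple i * cs.simple i) := by group
      _ = x := by rw [hs, one_mul, mul_one]
  have h2 : (cs.simple i * p.1 * cs.simple i = cs.simple i) ↔ (p.1 = cs.simple i) := by
    constructor
    · intro h
      have h' := congrArg (fun y => cs.simple i * y * cs.simple i) h
      rw [h1] at h'
      rw [h', hs, one_mul]
    · intro h; rw [h, hs, one_mul]
  show etaFun cs i (cs.simple i * p.1 * cs.simple i, _) = p
  unfold etaFun
  by_cases hc : p.1 = cs.simple i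
  · simp only [if_pos (h2.mpr hc), if_pos hc, h1, neg_neg]
  · simp only [if_neg (fun h => hc (h2.mp h)), if_neg hc, h1]

private def eta (i : B) : Equiv.Perm (W × ℤˣ) := (etaFun_invol cs i).toPerm

private lemma eta_apply (i : B) (p : W × ℤˣ) :
    eta cs i p = (cs.simple i * p.1 * cs.simple i, if p.1 = cs.simple i then -p.2 else p.2) := rfl

private lemma eta_liftable : M.IsLiftable (eta cs) := by
  intro i j
  set a := cs.simple i with ha
  set b := cs.simple j with hb
  have ha' : a⁻¹ = a := simple_inv cs i
  have hb' : b⁻¹ = b := simple_inv cs j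
  have haa : a * a = 1 := cs.simple_mul_simple_self i
  have hbb : b * b = 1 := cs.simple_mul_simple_self j
  obtain ⟨X, hX⟩ : ∃ X : W, X = a * b := ⟨_, rfl⟩
  have hXm : X ^ (M i j) = 1 := by rw [hX]; exact cs.simple_mul_simple_pow i j
  have hXc : ∀ r : ℕ, X ^ r * X = X * X ^ r := by
    intro r; rw [← pow_succ, ← pow_succ']
  have hkey : ∀ (r : ℕ), X⁻¹ * (b * X ^ r) * X = b * X ^ (r + 2) := by
    intro r
    have h1 : X⁻¹ * b * X = b * (X * X) := by
      rw [hX, mul_inv_rev, ha', hb']; group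
    calc X⁻¹ * (b * X ^ r) * X = X⁻¹ * b * (X ^ r * X) := by group
      _ = X⁻¹ * b * (X * X ^ r) := by rw [hXc]
      _ = (X⁻¹ * b * X) * X ^ r := by group
      _ = b * (X * X) * X ^ r := by rw [h1]
      _ = b * (X * X * X ^ r) := by rw [mul_assoc]
      _ = b * X ^ (r + 2) := by rw [add_comm r 2, pow_add, pow_two, mul_assoc]
  have hconj : ∀ p1 : W, a * (b * p1 * b) * a = X * p1 * X⁻¹ := by
    intro p1
    rw [hX, mul_inv_rev, ha', hb']
    group
  have key : ∀ (k : ℕ) (p : W × ℤˣ), ((eta cs i * eta cs j) ^ k) p =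
      (X ^ k * p.1 * (X ^ k)⁻¹,
        p.2 * ∏ r ∈ Finset.range (2 * k), (if b * X ^ r = p.1 then (-1 : ℤˣ) else 1)) := by
    intro k
    induction k with
    | zero => intro p; simp
    | succ k ih =>
      intro p
      have happ : ((eta cs i * eta cs j) ^ (k+1)) p
          = ((eta cs i * eta cs j) ^ k) ((eta cs i * eta cs j) p) := by
        rw [pow_succ]; rfl
      have e0 : (b * X ^ 0 = p.1) = (p.1 = b) := by
        rw [pow_zero, mul_one]; exact propext eq_comm
      have e1 : (b * X ^ 1 = p.1) = (b * p.1 * b = a) := by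
        apply propext
        constructor
        · intro h
          rw [← h, pow_one, hX]
          calc b * (b * (a * b)) * b = (b * b) * a * (b * b) := by group
            _ = a := by rw [hbb, one_mul, mul_one]
        · intro h
          have h' := congrArg (fun y => b * y * b) h
          have : b * (b * p.1 * b) * b = p.1 := by
            calc b * (b * p.1 * b) * b = (b * b) * p.1 * (b * b) := by group
              _ = p.1 := by rw [hbb, one_mul, mul_one]
          rw [this] at h'
          rw [h', pow_one, hX, ← mul_assoc]
      have hgp : (eta cs i * eta cs j) p
          = (X * p.1 * X⁻¹,
             p.2 * ((if b * X ^ 0 = p.1 then (-1:ℤˣ) else 1) * (if b * X ^ 1 = p.1 then (-1:ℤˣ) else 1))) := by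
        show eta cs i (eta cs j p) = _
        rw [eta_apply, eta_apply]
        simp only [← ha, ← hb]
        rw [flip_eq, flip_eq, e0, e1, hconj]
        simp only [mul_assoc]
      rw [happ, hgp, ih]
      simp only
      have hfst : X ^ k * (X * p.1 * X⁻¹) * (X ^ k)⁻¹ = X ^ (k+1) * p.1 * (X ^ (k+1))⁻¹ := by
        rw [pow_succ']
        group
      have er : ∀ r : ℕ, (if b * X ^ r = X * p.1 * X⁻¹ then (-1:ℤˣ) else 1)
          = (if b * X ^ (r + 2) = p.1 then (-1:ℤˣ) else 1) := by
        intro r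
        congr 1
        apply propext
        constructor
        · intro h
          rw [← hkey r, h]
          group
        · intro h
          rw [← h, ← hkey r]
          group
      rw [Prod.mk.injEq]
      refine ⟨hfst, ?_⟩
      rw [show (2 * (k + 1)) = (2 * k + 1) + 1 by ring, Finset.prod_range_succ',
        Finset.prod_range_succ', zero_add]
      simp only [show ∀ r : ℕ, r + 1 + 1 = r + 2 from fun _ => rfl]
      rw [Finset.prod_congr rfl (fun r _ => er r)]
      ac_rfl
  have := key (M i j)
  apply Equiv.ext
  intro p
  rw [this p, hXm]
  have hper : ∀ r : ℕ, (if b * X ^ (M i j + r) = p.1 then (-1:ℤˣ) else 1)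
      = (if b * X ^ r = p.1 then (-1:ℤˣ) else 1) := by
    intro r
    congr 2
    rw [pow_add, hXm, one_mul]
  have : ∏ r ∈ Finset.range (2 * M i j), (if b * X ^ r = p.1 then (-1 : ℤˣ) else 1) = 1 := by
    have h2 : 2 * M i j = M i j + M i j := by ring
    rw [h2, Finset.prod_range_add]
    simp only [hper]
    exact Int.units_mul_self _
  rw [this]
  simp

private def theta : W →* Equiv.Perm (W × ℤˣ) := cs.lift ⟨eta cs, eta_liftable cs⟩

private lemma theta_simple (i : B) : theta cs (cs.simple i) = eta cs i :=
  cs.lift_apply_simple (eta_liftable cs) i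

private def signOf (ω : List B) (t : W) : ℤˣ :=
  ((cs.rightInvSeq ω).map (fun u => if u = t then (-1 : ℤˣ) else 1)).prod

private lemma rightInvSeq_cons (i : B) (ω : List B) :
    cs.rightInvSeq (i :: ω) = ((cs.wordProd ω)⁻¹ * cs.simple i * cs.wordProd ω) :: cs.rightInvSeq ω := rfl

private lemma theta_wordProd (ω : List B) (t : W) (ε : ℤˣ) :
    theta cs (cs.wordProd ω) (t, ε) =
      (cs.wordProd ω * t * (cs.wordProd ω)⁻¹, ε * signOf cs ω t) := by
  induction ω generalizing ε with
  | nil => simp [signOf]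
  | cons i ω ih =>
    rw [cs.wordProd_cons, map_mul]
    have happ : (theta cs (cs.simple i) * theta cs (cs.wordProd ω)) (t, ε)
        = theta cs (cs.simple i) (theta cs (cs.wordProd ω) (t, ε)) := rfl
    rw [happ, ih, theta_simple, eta_apply]
    simp only
    have hcond : (cs.wordProd ω * t * (cs.wordProd ω)⁻¹ = cs.simple i)
        = ((cs.wordProd ω)⁻¹ * cs.simple i * cs.wordProd ω = t) := by
      apply propext
      constructor
      · intro h
        rw [← h]
        group
      · intro h
        rw [← h]
        group
    rw [Prod.mk.injEq]
    constructor
    · rw [mul_inv_rev, simple_inv]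
      group
    · rw [flip_eq, hcond]
      have : signOf cs (i :: ω) t
          = (if (cs.wordProd ω)⁻¹ * cs.simple i * cs.wordProd ω = t then (-1:ℤˣ) else 1) * signOf cs ω t := by
        rw [signOf, rightInvSeq_cons, List.map_cons, List.prod_cons, ← signOf]
      rw [this]
      ac_rfl

private lemma signOf_eq_of_wordProd_eq {ω ω' : List B} (h : cs.wordProd ω = cs.wordProd ω') (t : W) :
    signOf cs ω t = signOf cs ω' t := by
  have h1 := theta_wordProd cs ω t 1
  have h2 := theta_wordProd cs ω' t 1
  rw [h] at h1
  rw [h1] at h2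
  have := (Prod.mk.injEq _ _ _ _).mp h2
  simpa using this.2

private lemma prod_map_eq_one_of_not_mem {t : W} {l : List W} (h : t ∉ l) :
    (l.map (fun u => if u = t then (-1 : ℤˣ) else 1)).prod = 1 := by
  induction l with
  | nil => simp
  | cons x l ih =>
    simp only [List.map_cons, List.prod_cons]
    rw [if_neg (fun hx => h (by rw [← hx]; exact List.mem_cons_self)), one_mul]
    exact ih (fun hl => h (List.mem_cons_of_mem _ hl))

private lemma prod_map_eq_neg_one_of_nodup_mem {t : W} {l : List W} (hn : l.Nodup) (h : t ∈ l) :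
    (l.map (fun u => if u = t then (-1 : ℤˣ) else 1)).prod = -1 := by
  induction l with
  | nil => simp at h
  | cons x l ih =>
    simp only [List.map_cons, List.prod_cons]
    rcases List.mem_cons.mp h with h1 | h1
    · rw [if_pos h1.symm]
      have : t ∉ l := by
        rw [h1]
        exact (List.nodup_cons.mp hn).1
      rw [prod_map_eq_one_of_not_mem this, mul_one]
    · have hx : x ≠ t := by
        intro hx
        exact (List.nodup_cons.mp hn).1 (hx ▸ h1)
      rw [if_neg hx, one_mul]
      exact ih (List.nodup_cons.mp hn).2 h1

private lemma signOf_of_not_mem {ω : List B} {t : W} (h : t ∉ cs.rightInvSeq ω) :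
    signOf cs ω t = 1 := prod_map_eq_one_of_not_mem h

private lemma signOf_of_nodup_mem {ω : List B} {t : W} (hn : (cs.rightInvSeq ω).Nodup)
    (h : t ∈ cs.rightInvSeq ω) : signOf cs ω t = -1 := prod_map_eq_neg_one_of_nodup_mem hn h

/-- Key exchange-type fact: if `ℓ(s_i u) = ℓ(u) + 1`, `ℓ(u s_j) = ℓ(u) + 1` but
`ℓ(s_i u s_j) ≤ ℓ u`, then `s_i u = u s_j`. -/
lemma factX {u : W} {i j : B}
    (h1 : cs.length (cs.simple i * u) = cs.length u + 1)
    (h2 : cs.length (u * cs.simple j) = cs.length u + 1)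
    (h3 : cs.length (cs.simple i * u * cs.simple j) ≤ cs.length u) :
    cs.simple i * u = u * cs.simple j := by
  obtain ⟨ωv, redv, hv⟩ := cs.exists_reduced_word' (cs.simple i * u * cs.simple j)
  have hπ : cs.wordProd (ωv.concat j) = cs.simple i * u := by
    rw [cs.wordProd_concat, ← hv]
    rw [mul_assoc, mul_assoc, cs.simple_mul_simple_self j, mul_one]
  have hlen : cs.length (cs.wordProd (ωv.concat j)) = (ωv.concat j).length := by
    have hle := cs.length_wordProd_le (ωv.concat j)
    have hωv : ωv.length = cs.length (cs.simple i * u * cs.simple j) := by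
      rw [hv]; exact redv.symm
    rw [hπ, h1] at hle ⊢
    rw [List.length_concat] at hle ⊢
    omega
  have red'' : cs.IsReduced (ωv.concat j) := hlen
  have hmem : cs.simple j ∈ cs.rightInvSeq (ωv.concat j) := by
    rw [cs.rightInvSeq_concat, List.concat_eq_append]
    exact List.mem_append_right _ (List.mem_singleton_self _)
  have sign1 : signOf cs (ωv.concat j) (cs.simple j) = -1 :=
    signOf_of_nodup_mem cs (red''.nodup_rightInvSeq) hmem
  obtain ⟨ωu, redu, hu⟩ := cs.exists_reduced_word' u
  have hπ2 : cs.wordProd (i :: ωu) = cs.simple i * u := by rw [cs.wordProd_cons, ← hu]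
  have sign2 : signOf cs (i :: ωu) (cs.simple j) = -1 := by
    rw [signOf_eq_of_wordProd_eq cs (hπ2.trans hπ.symm) _]
    exact sign1
  have sign3 : signOf cs ωu (cs.simple j) = 1 := by
    apply signOf_of_not_mem
    intro hmem2
    have hinv := cs.isRightInversion_of_mem_rightInvSeq redu hmem2
    rw [← hu] at hinv
    have hlt := hinv.2
    omega
  rw [signOf, rightInvSeq_cons, List.map_cons, List.prod_cons, ← signOf, ← hu, sign3, mul_one] at sign2
  by_cases hc : u⁻¹ * cs.simple i * u = cs.simple j
  · have hg : cs.simple i * u = u * (u⁻¹ * cs.simple i * u) := by group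
    rw [hc] at hg
    exact hg
  · rw [if_neg hc] at sign2
    exact absurd sign2 (by decide)

end CoxAux

/-- A subset of `W × C` is isometric if `δ` between second components matches
the `W`-distance between first components. -/
def IsIsomSet (S : Set (W × C)) : Prop := ∀ p ∈ S, ∀ q ∈ S, δ p.2 q.2 = p.1⁻¹ * q.1

section BldgAux

variable {cs} {δ}
variable (hb : IsBuilding cs δ)

lemma simple_ne_one (i : B) : cs.simple i ≠ (1:W) := by
  intro h
  have h2 := cs.length_simple i
  rw [h] at h2
  simp at h2

lemma mem_parab_singleton {w : W} {i : B} : w ∈ parab cs {i} ↔ w = 1 ∨ w = cs.simple i := by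
  unfold parab
  rw [Set.image_singleton, Subgroup.mem_closure_singleton]
  constructor
  · rintro ⟨n, rfl⟩
    have hs2 : cs.simple i ^ (2:ℤ) = 1 := by
      rw [show (2:ℤ) = ((2:ℕ):ℤ) by norm_num, zpow_natCast, pow_two]
      exact cs.simple_mul_simple_self i
    rcases Int.even_or_odd n with ⟨r, hr⟩ | ⟨r, hr⟩
    · left
      rw [hr, show r + r = 2 * r by ring, zpow_mul, hs2, one_zpow]
    · right
      rw [hr, zpow_add, zpow_mul, hs2, one_zpow, one_mul, zpow_one]
  · rintro (rfl | rfl)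
    · exact ⟨0, by simp⟩
    · exact ⟨1, by simp⟩

lemma mem_residue_singleton {x y : C} {i : B} :
    y ∈ residue cs δ {i} x ↔ δ x y = 1 ∨ δ x y = cs.simple i := by
  show δ x y ∈ parab cs {i} ↔ _
  exact mem_parab_singleton

include hb

lemma dist_self (x : C) : δ x x = 1 := (hb.eq_one_iff x x).mpr rfl

lemma rank1_sym {x y : C} {i : B} (h : δ x y = cs.simple i) : δ y x = cs.simple i := by
  rcases hb.step y x y i h with h1 | h1
  · rw [dist_self hb] at h1
    have hxy : y = x := (hb.eq_one_iff y x).mp h1.symm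
    rw [hxy, dist_self hb] at h
    exact absurd h.symm (simple_ne_one i)
  · rw [dist_self hb] at h1
    have : δ y x = (cs.simple i)⁻¹ := by
      rw [eq_inv_iff_mul_eq_one]
      exact h1.symm
    rw [this, simple_inv]

/-- Forced walk: if `δ a b = π ω` and the product `δ x a * π ω` is length-additive,
then `δ x b = δ x a * π ω`. -/
lemma fwalk : ∀ (ω : List B), ∀ (x a b : C), δ a b = cs.wordProd ω →
    cs.length (δ x a * cs.wordProd ω) = cs.length (δ x a) + ω.length →
    δ x b = δ x a * cs.wordProd ω := by
  intro ω
  induction ω using List.reverseRecOn with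
  | nil =>
    intro x a b hab _
    rw [cs.wordProd_nil] at hab ⊢
    rw [mul_one, (hb.eq_one_iff a b).mp hab]
  | append_singleton ω i ih =>
    intro x a b hab hL
    have hπ : cs.wordProd (ω ++ [i]) = cs.wordProd ω * cs.simple i := by
      rw [cs.wordProd_append, cs.wordProd_singleton]
    rw [hπ] at hab hL
    rw [List.length_append, List.length_singleton] at hL
    obtain ⟨c, hc1, hc2⟩ := hb.exists_step a b i
    have hac : δ a c = cs.wordProd ω := by
      rw [hc2, hab, mul_assoc, cs.simple_mul_simple_self i, mul_one]
    have hcb : δ c b = cs.simple i := rank1_sym hb hc1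
    have hlen' : cs.length (δ x a * cs.wordProd ω) = cs.length (δ x a) + ω.length := by
      have hu : cs.length (δ x a * cs.wordProd ω) ≤ cs.length (δ x a) + ω.length := by
        calc cs.length (δ x a * cs.wordProd ω) ≤ cs.length (δ x a) + cs.length (cs.wordProd ω) :=
              cs.length_mul_le _ _
          _ ≤ cs.length (δ x a) + ω.length := by
              have := cs.length_wordProd_le ω
              omega
      have hl : cs.length (δ x a) + ω.length + 1 ≤ cs.length (δ x a * cs.wordProd ω) + 1 := by
        have heq : δ x a * (cs.wordProd ω * cs.simple i) = (δ x a * cs.wordProd ω) * cs.simple i := by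
          rw [mul_assoc]
        rw [heq] at hL
        have := cs.length_mul_le (δ x a * cs.wordProd ω) (cs.simple i)
        rw [cs.length_simple] at this
        omega
      omega
    have hxc : δ x c = δ x a * cs.wordProd ω := ih x a c hac hlen'
    have : δ x b = δ x c * cs.simple i := by
      apply hb.step_of_length x c b i hcb
      rw [hxc]
      rw [← mul_assoc] at hL
      rw [hL, hlen']
      omega
    rw [this, hxc, mul_assoc, hπ]

lemma dist_symm (x y : C) : δ y x = (δ x y)⁻¹ := by
  generalize h : cs.length (δ x y) = n
  induction n using Nat.strong_induction_on generalizing x y with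
  | _ n ih =>
    rcases Nat.eq_zero_or_pos n with rfl | hpos
    · have : δ x y = 1 := cs.length_eq_zero_iff.mp h
      rw [this, (hb.eq_one_iff x y).mp this, dist_self hb, inv_one]
    · obtain ⟨ω, red, hω⟩ := cs.exists_reduced_word' (δ x y)
      have hne : ω ≠ [] := by
        intro hnil
        rw [hnil, cs.wordProd_nil] at hω
        rw [hω, cs.length_one] at h
        omega
      rcases List.eq_nil_or_concat ω with rfl | ⟨ω', i, rfl⟩
      · exact absurd rfl hne
      have hπ : cs.wordProd (ω'.concat i) = cs.wordProd ω' * cs.simple i := cs.wordProd_concat i ω'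
      obtain ⟨c, hc1, hc2⟩ := hb.exists_step x y i
      have hxc : δ x c = cs.wordProd ω' := by
        rw [hc2, hω, hπ, mul_assoc, cs.simple_mul_simple_self i, mul_one]
      have hred' : cs.IsReduced ω' := by
        have := red.take ω'.length
        rwa [List.concat_eq_append, List.take_left] at this
      have hlc : cs.length (δ x c) = ω'.length := by rw [hxc]; exact hred'
      have hlth : ω'.length < n := by
        have : n = (ω'.concat i).length := by rw [← h, hω]; exact red
        rw [List.length_concat] at this
        omega
      have hIH : δ c x = (δ x c)⁻¹ := ih ω'.length hlth x c hlc
      have hcx : δ c x = cs.wordProd ω'.reverse := by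
        rw [hIH, hxc, cs.wordProd_reverse]
      have hyc : δ y c = cs.simple i := hc1
      have goal1 : δ y x = δ y c * cs.wordProd ω'.reverse := by
        apply fwalk hb ω'.reverse y c x hcx
        rw [hyc, cs.wordProd_reverse, List.length_reverse]
        have : cs.simple i * (cs.wordProd ω')⁻¹ = (δ x y)⁻¹ := by
          rw [hω, hπ, mul_inv_rev, simple_inv]
        rw [this, cs.length_inv, h]
        rw [cs.length_simple]
        have : n = ω'.length + 1 := by
          have h2 : n = (ω'.concat i).length := by rw [← h, hω]; exact red
          rw [List.length_concat] at h2
          omega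
        omega
      rw [goal1, hyc, cs.wordProd_reverse, hω, hπ, mul_inv_rev, simple_inv]

lemma panel_internal {x₀ y z : C} {i : B}
    (hy : δ x₀ y = 1 ∨ δ x₀ y = cs.simple i) (hz : δ x₀ z = 1 ∨ δ x₀ z = cs.simple i) :
    δ y z = 1 ∨ δ y z = cs.simple i := by
  rcases hy with hy | hy
  · have : y = x₀ := ((hb.eq_one_iff x₀ y).mp hy).symm
    rw [this]
    exact hz
  · have hyx : δ y x₀ = cs.simple i := rank1_sym hb hy
    rcases hz with hz | hz
    · have : z = x₀ := ((hb.eq_one_iff x₀ z).mp hz).symm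
      rw [this]
      right; exact hyx
    · rcases hb.step y x₀ z i hz with h1 | h1
      · right; rw [h1, hyx]
      · left; rw [h1, hyx, cs.simple_mul_simple_self i]

/-- Gates exist on panels, with the standard structure. -/
lemma gate_panel (i : B) (x₀ x : C) :
    ∃ g, IsGate cs δ (residue cs δ {i} x₀) x g ∧
      (∀ y ∈ residue cs δ {i} x₀, y ≠ g → δ x y = δ x g * cs.simple i) ∧
      cs.length (δ x g * cs.simple i) = cs.length (δ x g) + 1 := by
  have hup : ∀ (g : C), g ∈ residue cs δ {i} x₀ →
      cs.length (δ x g * cs.simple i) = cs.length (δ x g) + 1 →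
      (∀ y ∈ residue cs δ {i} x₀, y ≠ g → δ x y = δ x g * cs.simple i) := by
    intro g hg hstep y hy hne
    have hgy : δ g y = 1 ∨ δ g y = cs.simple i := by
      apply panel_internal hb (mem_residue_singleton.mp hg) (mem_residue_singleton.mp hy)
    rcases hgy with hgy | hgy
    · exact absurd ((hb.eq_one_iff g y).mp hgy).symm hne
    · exact hb.step_of_length x g y i hgy hstep
  rcases cs.length_mul_simple (δ x x₀) i with hc | hc
  · -- x₀ is the gate
    have hx₀ : x₀ ∈ residue cs δ {i} x₀ := mem_residue_singleton.mpr (Or.inl (dist_self hb x₀))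
    refine ⟨x₀, ⟨hx₀, ?_⟩, hup x₀ hx₀ hc, hc⟩
    intro y hy
    rcases mem_residue_singleton.mp hy with h1 | h1
    · rw [(hb.eq_one_iff x₀ y).mp h1]
      simp [dist_self hb]
    · by_cases hne : y = x₀
      · rw [hne, dist_self hb]
        simp
    -- y ≠ x₀
      · rw [hup x₀ hx₀ hc y hy hne, h1, hc, cs.length_simple]
  · -- gate across
    obtain ⟨z₀, hz1, hz2⟩ := hb.exists_step x x₀ i
    have hz₀mem : z₀ ∈ residue cs δ {i} x₀ := mem_residue_singleton.mpr (Or.inr hz1)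
    have hlz : cs.length (δ x z₀) + 1 = cs.length (δ x x₀) := by rw [hz2]; omega
    have hzstep : cs.length (δ x z₀ * cs.simple i) = cs.length (δ x z₀) + 1 := by
      have : δ x z₀ * cs.simple i = δ x x₀ := by
        rw [hz2, mul_assoc, cs.simple_mul_simple_self i, mul_one]
      rw [this]
      omega
    refine ⟨z₀, ⟨hz₀mem, ?_⟩, hup z₀ hz₀mem hzstep, hzstep⟩
    intro y hy
    by_cases hne : y = z₀
    · rw [hne, dist_self hb]
      simp
    · have hzy : δ z₀ y = cs.simple i := by
        rcases panel_internal hb (mem_residue_singleton.mp hz₀mem) (mem_residue_singleton.mp hy) with h1 | h1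
        · exact absurd ((hb.eq_one_iff z₀ y).mp h1).symm hne
        · exact h1
      rw [hup z₀ hz₀mem hzstep y hy hne, hzy, hzstep, cs.length_simple]

lemma gate_unique {R : Set C} {x g g' : C} (h : IsGate cs δ R x g) (h' : IsGate cs δ R x g') :
    g = g' := by
  have h1 := h.2 g' h'.1
  have h2 := h'.2 g h.1
  have hz : cs.length (δ g g') = 0 := by omega
  exact (hb.eq_one_iff g g').mp (cs.length_eq_zero_iff.mp hz)

lemma proj_eq_of_gate {R : Set C} {x g : C} (hg : IsGate cs δ R x g) :
    proj cs δ R x = g := by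
  unfold proj
  rw [dif_pos ⟨g, hg⟩]
  exact gate_unique hb (Exists.choose_spec (⟨g, hg⟩ : ∃ g, IsGate cs δ R x g)) hg

section Apartment

variable {A : Set C} (hA : IsApartment cs δ A)
include hA

lemma apartment_inj {x y y' : C} (hx : x ∈ A) (hy : y ∈ A) (hy' : y' ∈ A)
    (h : δ x y = δ x y') : y = y' := by
  generalize hn : cs.length (δ x y) = n
  induction n using Nat.strong_induction_on generalizing y y' with
  | _ n ih =>
    rcases Nat.eq_zero_or_pos n with rfl | hpos
    · have h1 : δ x y = 1 := cs.length_eq_zero_iff.mp hn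
      have h2 : δ x y' = 1 := by rw [← h]; exact h1
      rw [← (hb.eq_one_iff x y).mp h1, ← (hb.eq_one_iff x y').mp h2]
    · have hne : δ x y ≠ 1 := by
        intro h1
        rw [h1, cs.length_one] at hn
        omega
      obtain ⟨i, hi⟩ := cs.exists_rightDescent_of_ne_one hne
      have hdesc : cs.length (δ x y * cs.simple i) < cs.length (δ x y) := hi
      -- gate for y's panel
      obtain ⟨g, hg, hgup, hgstep⟩ := gate_panel hb i y x
      have hymem : y ∈ residue cs δ {i} y := mem_residue_singleton.mpr (Or.inl (dist_self hb y))
      have hgy : δ x g = δ x y * cs.simple i := by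
        by_cases hgney : y = g
        · rw [← hgney] at hgstep
          omega
        · have := hgup y hymem hgney
          rw [this, mul_assoc, cs.simple_mul_simple_self i, mul_one]
      obtain ⟨g', hg', hgup', hgstep'⟩ := gate_panel hb i y' x
      have hymem' : y' ∈ residue cs δ {i} y' := mem_residue_singleton.mpr (Or.inl (dist_self hb y'))
      have hgy' : δ x g' = δ x y' * cs.simple i := by
        by_cases hgney : y' = g'
        · rw [← hgney] at hgstep'
          rw [← h] at hgstep'
          omega
        · have := hgup' y' hymem' hgney
          rw [this, mul_assoc, cs.simple_mul_simple_self i, mul_one]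
      have hgA : g ∈ A := by
        have := hA.2.1 (residue cs δ {i} y) ⟨i, y, rfl⟩ ⟨y, hymem, hy⟩ x hx
        rwa [proj_eq_of_gate hb hg] at this
      have hgA' : g' ∈ A := by
        have := hA.2.1 (residue cs δ {i} y') ⟨i, y', rfl⟩ ⟨y', hymem', hy'⟩ x hx
        rwa [proj_eq_of_gate hb hg'] at this
      have hgg' : g = g' := by
        apply ih (cs.length (δ x y * cs.simple i)) (by omega) hgA hgA'
        · rw [hgy, hgy', h]
        · rw [hgy]
      -- now y, y', g all in the panel of g
      have hyQ : g ∈ residue cs δ {i} y := hg.1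
      have hy'Q : g' ∈ residue cs δ {i} y' := hg'.1
      have hgQy : y ∈ residue cs δ {i} g := by
        rcases mem_residue_singleton.mp hyQ with h1 | h1
        · rw [(hb.eq_one_iff y g).mp h1]
          exact mem_residue_singleton.mpr (Or.inl (dist_self hb g))
        · exact mem_residue_singleton.mpr (Or.inr (rank1_sym hb h1))
      have hgQy' : y' ∈ residue cs δ {i} g := by
        rw [hgg']
        rcases mem_residue_singleton.mp hy'Q with h1 | h1
        · rw [(hb.eq_one_iff y' g').mp h1]
          exact mem_residue_singleton.mpr (Or.inl (dist_self hb g'))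
        · exact mem_residue_singleton.mpr (Or.inr (rank1_sym hb h1))
      have hgQg : g ∈ residue cs δ {i} g := mem_residue_singleton.mpr (Or.inl (dist_self hb g))
      have hncard := hA.2.2 (residue cs δ {i} g) ⟨i, g, rfl⟩ ⟨g, hgQg, hgA⟩
      obtain ⟨u, v, huv, hQ⟩ := Set.ncard_eq_two.mp hncard
      have hyuv : y ∈ ({u, v} : Set C) := hQ ▸ (⟨hgQy, hy⟩ : y ∈ _ ∩ A)
      have hy'uv : y' ∈ ({u, v} : Set C) := hQ ▸ (⟨hgQy', hy'⟩ : y' ∈ _ ∩ A)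
      have hguv : g ∈ ({u, v} : Set C) := hQ ▸ (⟨hgQg, hgA⟩ : g ∈ _ ∩ A)
      have hgny : g ≠ y := by
        intro h1
        have heq : δ x y = δ x y * cs.simple i := by rw [← hgy, h1]
        have h2 : cs.length (δ x y) = cs.length (δ x y * cs.simple i) := by rw [← heq]
        omega
      have hgny' : g ≠ y' := by
        intro h1
        have heq : δ x y' = δ x y' * cs.simple i := by rw [← hgy', ← hgg', h1]
        have h2 : cs.length (δ x y') = cs.length (δ x y' * cs.simple i) := by rw [← heq]
        rw [← h] at h2
        omega
      simp only [Set.mem_insert_iff, Set.mem_singleton_iff] at hyuv hy'uv hguv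
      rcases hyuv with rfl | rfl <;> rcases hy'uv with h4 | h4 <;> rcases hguv with h5 | h5 <;>
        first
          | exact h4.symm
          | exact absurd h5 hgny
          | exact absurd (h5.trans h4.symm) hgny'

/-- In a panel meeting an apartment, there is a second chamber of the apartment. -/
lemma apartment_second {z : C} (hz : z ∈ A) (i : B) :
    ∃ z' ∈ A, z' ≠ z ∧ δ z z' = cs.simple i := by
  have hzmem : z ∈ residue cs δ {i} z := mem_residue_singleton.mpr (Or.inl (dist_self hb z))
  have hncard := hA.2.2 (residue cs δ {i} z) ⟨i, z, rfl⟩ ⟨z, hzmem, hz⟩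
  obtain ⟨u, v, huv, hQ⟩ := Set.ncard_eq_two.mp hncard
  have hzuv : z ∈ ({u, v} : Set C) := hQ ▸ (⟨hzmem, hz⟩ : z ∈ _ ∩ A)
  have hu : u ∈ residue cs δ {i} z ∩ A := hQ ▸ (by simp : u ∈ ({u, v} : Set C))
  have hv : v ∈ residue cs δ {i} z ∩ A := hQ ▸ (by simp : v ∈ ({u, v} : Set C))
  simp only [Set.mem_insert_iff, Set.mem_singleton_iff] at hzuv
  have key : ∀ w : C, w ∈ residue cs δ {i} z ∩ A → w ≠ z → ∃ z' ∈ A, z' ≠ z ∧ δ z z' = cs.simple i := by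
    intro w hw hwz
    refine ⟨w, hw.2, hwz, ?_⟩
    rcases mem_residue_singleton.mp hw.1 with h1 | h1
    · exact absurd ((hb.eq_one_iff z w).mp h1).symm hwz
    · exact h1
  rcases hzuv with rfl | rfl
  · exact key v hv (Ne.symm huv)
  · exact key u hu huv

lemma apartment_exists {a : C} (ha : a ∈ A) (w : W) : ∃ z ∈ A, δ a z = w := by
  generalize hn : cs.length w = n
  induction n using Nat.strong_induction_on generalizing w with
  | _ n ih =>
    rcases Nat.eq_zero_or_pos n with rfl | hpos
    · refine ⟨a, ha, ?_⟩
      rw [dist_self hb, cs.length_eq_zero_iff.mp hn]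
    · have hne : w ≠ 1 := by
        intro h1
        rw [h1, cs.length_one] at hn
        omega
      obtain ⟨i, hi⟩ := cs.exists_rightDescent_of_ne_one hne
      have hdesc : cs.length (w * cs.simple i) < cs.length w := hi
      obtain ⟨z', hz'A, hz'⟩ := ih (cs.length (w * cs.simple i)) (by omega) (w * cs.simple i) rfl
      obtain ⟨z'', hz''A, hne'', hstep''⟩ := apartment_second hb hA hz'A i
      refine ⟨z'', hz''A, ?_⟩
      rcases hb.step a z' z'' i hstep'' with h1 | h1
      · exact absurd (apartment_inj hb hA ha hz''A hz'A h1) hne''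
      · rw [h1, hz', mul_assoc, cs.simple_mul_simple_self i, mul_one]

lemma apartment_mul {x y z : C} (hx : x ∈ A) (hy : y ∈ A) (hz : z ∈ A) :
    δ x z = δ x y * δ y z := by
  generalize hn : cs.length (δ y z) = n
  induction n using Nat.strong_induction_on generalizing z with
  | _ n ih =>
    rcases Nat.eq_zero_or_pos n with rfl | hpos
    · have h1 : δ y z = 1 := cs.length_eq_zero_iff.mp hn
      rw [h1, mul_one, ((hb.eq_one_iff y z).mp h1)]
    · have hne : δ y z ≠ 1 := by
        intro h1
        rw [h1, cs.length_one] at hn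
        omega
      obtain ⟨i, hi⟩ := cs.exists_rightDescent_of_ne_one hne
      have hdesc : cs.length (δ y z * cs.simple i) < cs.length (δ y z) := hi
      obtain ⟨z', hz'A, hz'⟩ := apartment_exists hb hA hy (δ y z * cs.simple i)
      obtain ⟨u, huA, hneu, hstepu⟩ := apartment_second hb hA hz'A i
      have hyu : δ y u = δ y z := by
        rcases hb.step y z' u i hstepu with h1 | h1
        · exact absurd (apartment_inj hb hA hy huA hz'A h1) hneu
        · rw [h1, hz', mul_assoc, cs.simple_mul_simple_self i, mul_one]
      have huz : u = z := apartment_inj hb hA hy huA hz hyu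
      have hz'z : δ z' z = cs.simple i := by rw [← huz]; exact hstepu
      have hIH : δ x z' = δ x y * (δ y z * cs.simple i) := by
        have := ih (cs.length (δ y z * cs.simple i)) (by omega) hz'A (by rw [hz'])
        rwa [hz'] at this
      rcases hb.step x z' z i hz'z with h1 | h1
      · exfalso
        have hzz : z = z' := apartment_inj hb hA hx hz hz'A h1
        rw [← hzz] at hz'
        have h2 : cs.length (δ y z) = cs.length (δ y z * cs.simple i) := by rw [← hz']
        omega
      · rw [h1, hIH, mul_assoc, mul_assoc, cs.simple_mul_simple_self i, mul_one]

end Apartment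

/-- Walk lemma: along a gallery from `a` to `b` of type `ω`, the distance from `x`
changes by a product `σ` of a subword, so `ℓ σ ≤ ω.length`. -/
lemma walk : ∀ (ω : List B) (a b x : C), δ a b = cs.wordProd ω →
    ∃ σ : W, δ x b = δ x a * σ ∧ cs.length σ ≤ ω.length := by
  intro ω
  induction ω using List.reverseRecOn with
  | nil =>
    intro a b x hab
    rw [cs.wordProd_nil] at hab
    refine ⟨1, ?_, by simp⟩
    rw [(hb.eq_one_iff a b).mp hab, mul_one]
  | append_singleton ω i ih =>
    intro a b x hab
    rw [cs.wordProd_append, cs.wordProd_singleton] at hab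
    obtain ⟨c, hc1, hc2⟩ := hb.exists_step a b i
    have hac : δ a c = cs.wordProd ω := by
      rw [hc2, hab, mul_assoc, cs.simple_mul_simple_self i, mul_one]
    have hcb : δ c b = cs.simple i := rank1_sym hb hc1
    obtain ⟨σ, hσ1, hσ2⟩ := ih a c x hac
    rcases hb.step x c b i hcb with h1 | h1
    · refine ⟨σ, by rw [h1, hσ1], ?_⟩
      rw [List.length_append]
      omega
    · refine ⟨σ * cs.simple i, by rw [h1, hσ1, mul_assoc], ?_⟩
      have := cs.length_mul_le σ (cs.simple i)
      rw [cs.length_simple] at this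
      rw [List.length_append, List.length_singleton]
      omega

variable {S : Set (W × C)}

lemma insert_of_key (hS : IsIsomSet δ S) {v : W} {j : B} {y : C}
    (key : ∀ p ∈ S, δ p.2 y = p.1⁻¹ * (v * cs.simple j)) :
    IsIsomSet δ (insert (v * cs.simple j, y) S) := by
  intro p hp q hq
  rcases Set.mem_insert_iff.mp hp with hp1 | hp1 <;> rcases Set.mem_insert_iff.mp hq with hq1 | hq1
  · rw [hp1, hq1]
    simp only
    rw [dist_self hb]
    group
  · rw [hp1]
    simp only
    rw [dist_symm hb, key q hq1, mul_inv_rev, inv_inv]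
  · rw [hq1]
    exact key p hp1
  · exact hS p hp1 q hq1

/-- One-chamber extension of an isometric set. -/
lemma extend_adj (hS : IsIsomSet δ S) {v : W} {x : C} (hvS : (v, x) ∈ S) (j : B) :
    ∃ y, IsIsomSet δ (insert (v * cs.simple j, y) S) := by
  have keyup : ∀ (y : C), δ x y = cs.simple j → ∀ p ∈ S,
      ¬ (cs.length (p.1⁻¹ * (v * cs.simple j)) < cs.length (p.1⁻¹ * v)) →
      δ p.2 y = p.1⁻¹ * (v * cs.simple j) := by
    intro y hy1 p hp hnd
    have hda : δ p.2 x = p.1⁻¹ * v := hS p hp (v, x) hvS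
    have hlen : cs.length ((p.1⁻¹ * v) * cs.simple j) = cs.length (p.1⁻¹ * v) + 1 := by
      have hne := cs.length_mul_simple_ne (p.1⁻¹ * v) j
      have h2 := cs.length_mul_simple (p.1⁻¹ * v) j
      rw [← mul_assoc] at hnd
      omega
    have hst := hb.step_of_length p.2 x y j hy1 (by rw [hda]; exact hlen)
    rw [hst, hda, mul_assoc]
  by_cases hD : ∃ p ∈ S, cs.length (p.1⁻¹ * (v * cs.simple j)) < cs.length (p.1⁻¹ * v)
  · obtain ⟨p₀, hp₀S, hp₀⟩ := hD
    have hd₀ : δ p₀.2 x = p₀.1⁻¹ * v := hS p₀ hp₀S (v, x) hvS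
    obtain ⟨y, hy1, hy2⟩ := hb.exists_step p₀.2 x j
    have hdy₀ : δ p₀.2 y = p₀.1⁻¹ * (v * cs.simple j) := by
      rw [hy2, hd₀, mul_assoc]
    refine ⟨y, insert_of_key hb hS ?_⟩
    intro p hp
    by_cases hdown : cs.length (p.1⁻¹ * (v * cs.simple j)) < cs.length (p.1⁻¹ * v)
    · have hda : δ p.2 x = p.1⁻¹ * v := hS p hp (v, x) hvS
      rcases hb.step p.2 x y j hy1 with h1 | h1
      · exfalso
        obtain ⟨ω, red, hω⟩ := cs.exists_reduced_word' (δ p₀.2 y)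
        obtain ⟨σ, hσ1, hσ2⟩ := walk hb ω p₀.2 y p.2 hω
        have hdpp : δ p.2 p₀.2 = p.1⁻¹ * p₀.1 := hS p hp p₀ hp₀S
        have h3 : p.1⁻¹ * v = (p.1⁻¹ * p₀.1) * σ := by
          rw [← hda, ← h1, hσ1, hdpp]
        have hσ : σ = p₀.1⁻¹ * v := by
          have h4 : (p.1⁻¹ * p₀.1)⁻¹ * (p.1⁻¹ * v) = σ := by rw [h3]; group
          rw [← h4, mul_inv_rev, inv_inv]
          group
        have hlω : ω.length = cs.length (p₀.1⁻¹ * (v * cs.simple j)) := by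
          rw [← hdy₀, hω]
          exact red.symm
        rw [hσ] at hσ2
        omega
      · rw [h1, hda, mul_assoc]
    · exact keyup y hy1 p hp hdown
  · push_neg at hD
    obtain ⟨y, hy1, _⟩ := hb.exists_step x x j
    refine ⟨y, insert_of_key hb hS ?_⟩
    intro p hp
    exact keyup y hy1 p hp (by have := hD p hp; omega)

/-- Every nonempty isometric set extends to a global isometry `W → C`. -/
lemma exists_total {S0 : Set (W × C)} (hS0 : IsIsomSet δ S0) (hne : S0.Nonempty) :
    ∃ F : W → C, (∀ u v : W, δ (F u) (F v) = u⁻¹ * v) ∧ (∀ p ∈ S0, F p.1 = p.2) := by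
  obtain ⟨Sbar, hS0sub, hmax⟩ := zorn_subset_nonempty {S : Set (W × C) | S0 ⊆ S ∧ IsIsomSet δ S}
    (by
      intro c hc hchain hcne
      refine ⟨⋃₀ c, ⟨?_, ?_⟩, fun s hs => Set.subset_sUnion_of_mem hs⟩
      · obtain ⟨s, hs⟩ := hcne
        exact (hc hs).1.trans (Set.subset_sUnion_of_mem hs)
      · intro p hp q hq
        obtain ⟨s1, hs1, hp1⟩ := hp
        obtain ⟨s2, hs2, hq2⟩ := hq
        rcases hchain.total hs1 hs2 with hss | hss
        · exact (hc hs2).2 p (hss hp1) q hq2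
        · exact (hc hs1).2 p hp1 q (hss hq2))
    S0 ⟨Set.Subset.rfl, hS0⟩
  have hSbar : IsIsomSet δ Sbar := hmax.1.2
  have claim : ∀ n : ℕ, ∀ w : W, (∃ p ∈ Sbar, cs.length (p.1⁻¹ * w) ≤ n) → ∃ x, (w, x) ∈ Sbar := by
    intro n
    induction n with
    | zero =>
      rintro w ⟨p, hp, hl⟩
      have h1 : p.1⁻¹ * w = 1 := cs.length_eq_zero_iff.mp (Nat.le_zero.mp hl)
      have h2 : w = p.1 := by
        have := congrArg (fun z => p.1 * z) h1
        simpa [mul_assoc] using this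
      exact ⟨p.2, by rw [h2]; exact hp⟩
    | succ n ih =>
      rintro w ⟨p, hp, hl⟩
      rcases Nat.lt_or_ge (cs.length (p.1⁻¹ * w)) (n+1) with hlt | hge
      · exact ih w ⟨p, hp, by omega⟩
      · have hlen : cs.length (p.1⁻¹ * w) = n + 1 := le_antisymm hl hge
        obtain ⟨ω, red, hω⟩ := cs.exists_reduced_word' (p.1⁻¹ * w)
        cases ω with
        | nil =>
          rw [cs.wordProd_nil] at hω
          rw [hω, cs.length_one] at hlen
          omega
        | cons j ω' =>
          have hv1 : (p.1 * cs.simple j)⁻¹ * w = cs.wordProd ω' := by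
            rw [mul_inv_rev, simple_inv, mul_assoc, hω, cs.wordProd_cons, ← mul_assoc,
              cs.simple_mul_simple_self j, one_mul]
          have hred' : cs.IsReduced ω' := by
            have := red.drop 1
            simpa using this
          have hlenω : ω'.length = n := by
            have h3 : (j :: ω').length = n + 1 := by rw [← hlen, hω]; exact red.symm
            simpa using h3
          have hlen' : cs.length ((p.1 * cs.simple j)⁻¹ * w) ≤ n := by
            rw [hv1]
            have := cs.length_wordProd_le ω'
            omega
          obtain ⟨y, hy⟩ := extend_adj hb hSbar (show (p.1, p.2) ∈ Sbar from hp) j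
          have hS' : insert (p.1 * cs.simple j, y) Sbar ∈
              {S : Set (W × C) | S0 ⊆ S ∧ IsIsomSet δ S} :=
            ⟨hS0sub.trans (Set.subset_insert _ _), hy⟩
          have hsub2 : insert (p.1 * cs.simple j, y) Sbar ⊆ Sbar :=
            hmax.2 hS' (Set.subset_insert _ _)
          have hmem : (p.1 * cs.simple j, y) ∈ Sbar := hsub2 (Set.mem_insert _ _)
          exact ih w ⟨(p.1 * cs.simple j, y), hmem, hlen'⟩
  have domtot : ∀ w : W, ∃ x, (w, x) ∈ Sbar := by
    intro w
    obtain ⟨p0, hp0⟩ := hne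
    exact claim (cs.length (p0.1⁻¹ * w)) w ⟨p0, hS0sub hp0, le_refl _⟩
  refine ⟨fun w => (domtot w).choose, ?_, ?_⟩
  · intro u v
    exact hSbar (u, (domtot u).choose) (domtot u).choose_spec (v, (domtot v).choose)
      (domtot v).choose_spec
  · intro p hp
    have h1 := hSbar (p.1, (domtot p.1).choose) (domtot p.1).choose_spec p (hS0sub hp)
    simp only [inv_mul_cancel] at h1
    exact (hb.eq_one_iff _ _).mp h1

section RangeApartment

variable {F : W → C} (hF : ∀ u v : W, δ (F u) (F v) = u⁻¹ * v)
include hF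

lemma range_F_ne {v : W} {j : B} : F v ≠ F (v * cs.simple j) := by
  intro h
  have := hF v (v * cs.simple j)
  rw [h, dist_self hb] at this
  have h2 : (1 : W) = cs.simple j := by
    rw [this]
    group
  exact simple_ne_one j h2.symm

lemma range_F_panel {j : B} {x₀ : C} {v : W} (hv : F v ∈ residue cs δ {j} x₀) :
    residue cs δ {j} x₀ ∩ Set.range F = {F v, F (v * cs.simple j)} := by
  apply Set.eq_of_subset_of_subset
  · rintro z ⟨hzP, u, rfl⟩
    have h1 : δ (F v) (F u) = 1 ∨ δ (F v) (F u) = cs.simple j :=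
      panel_internal hb (mem_residue_singleton.mp hv) (mem_residue_singleton.mp hzP)
    rw [hF v u] at h1
    rcases h1 with h1 | h1
    · have huv : u = v := by
        have h2 := congrArg (fun z => v * z) h1
        simp only [mul_inv_cancel_left, mul_one] at h2
        exact h2
      rw [huv]
      exact Set.mem_insert _ _
    · have huv : u = v * cs.simple j := by
        have h2 := congrArg (fun z => v * z) h1
        simp only [mul_inv_cancel_left] at h2
        exact h2
      rw [huv]
      exact Set.mem_insert_of_mem _ rfl
  · rintro z (rfl | rfl)
    · exact ⟨hv, v, rfl⟩
    · refine ⟨?_, v * cs.simple j, rfl⟩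
      have hstep : δ (F v) (F (v * cs.simple j)) = cs.simple j := by
        rw [hF]
        group
      rcases hb.step x₀ (F v) (F (v * cs.simple j)) j hstep with h1 | h1 <;>
        rcases mem_residue_singleton.mp hv with h2 | h2 <;>
          apply mem_residue_singleton.mpr
      · left; rw [h1, h2]
      · right; rw [h1, h2]
      · right; rw [h1, h2, one_mul]
      · left; rw [h1, h2, cs.simple_mul_simple_self j]

lemma range_F_gate {j : B} {x₀ : C} {v u : W} (hv : F v ∈ residue cs δ {j} x₀)
    (hup : cs.length (u⁻¹ * v * cs.simple j) = cs.length (u⁻¹ * v) + 1) :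
    IsGate cs δ (residue cs δ {j} x₀) (F u) (F v) := by
  refine ⟨hv, ?_⟩
  intro y hy
  have h1 : δ (F v) y = 1 ∨ δ (F v) y = cs.simple j :=
    panel_internal hb (mem_residue_singleton.mp hv) (mem_residue_singleton.mp hy)
  rcases h1 with h1 | h1
  · have hyv : y = F v := ((hb.eq_one_iff (F v) y).mp h1).symm
    rw [hyv, dist_self hb, cs.length_one]
    simp
  · have hyv : δ y (F v) = cs.simple j := rank1_sym hb h1
    have hfv : δ (F u) (F v) = u⁻¹ * v := hF u v
    rcases hb.step (F u) (F v) y j h1 with h2 | h2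
    · exfalso
      have h3 := hb.step_of_length (F u) y (F v) j hyv (by rw [h2, hfv]; exact hup)
      rw [h2, hfv] at h3
      have h4 := congrArg cs.length h3
      omega
    · rw [h2, h1, hfv, cs.length_simple, hup]

lemma range_F_apartment : IsApartment cs δ (Set.range F) := by
  refine ⟨⟨F 1, 1, rfl⟩, ?_, ?_⟩
  · -- projections stay in the range
    rintro P ⟨j, x₀, rfl⟩ ⟨z, hzP, v, rfl⟩ c ⟨u, rfl⟩
    by_cases hup : cs.length (u⁻¹ * v * cs.simple j) = cs.length (u⁻¹ * v) + 1
    · have hg := range_F_gate hb hF hzP hup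
      rw [proj_eq_of_gate hb hg]
      exact ⟨v, rfl⟩
    · have hv' : F (v * cs.simple j) ∈ residue cs δ {j} x₀ := by
        have := range_F_panel hb hF hzP
        have hmem : F (v * cs.simple j) ∈ residue cs δ {j} x₀ ∩ Set.range F := by
          rw [this]
          right
          rfl
        exact hmem.1
      have hup' : cs.length (u⁻¹ * (v * cs.simple j) * cs.simple j)
          = cs.length (u⁻¹ * (v * cs.simple j)) + 1 := by
        have hne := cs.length_mul_simple_ne (u⁻¹ * v) j
        have h2 := cs.length_mul_simple (u⁻¹ * v) j
        have heq : u⁻¹ * (v * cs.simple j) * cs.simple j = u⁻¹ * v := by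
          rw [← mul_assoc, mul_assoc (u⁻¹ * v), cs.simple_mul_simple_self j, mul_one]
        rw [heq, ← mul_assoc]
        omega
      have hg := range_F_gate hb hF hv' hup'
      rw [proj_eq_of_gate hb hg]
      exact ⟨v * cs.simple j, rfl⟩
  · rintro P ⟨j, x₀, rfl⟩ ⟨z, hzP, v, rfl⟩
    rw [range_F_panel hb hF hzP]
    exact Set.ncard_pair (range_F_ne hb hF)

end RangeApartment
end BldgAux


private lemma three_distinct_not_pair {X : Type*} {a b c u v : X} (hab : a ≠ b) (hac : a ≠ c)
    (hbc : b ≠ c) (ha : a = u ∨ a = v) (hb2 : b = u ∨ b = v) (hc : c = u ∨ c = v) : False := by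
  rcases ha with h | h <;> rcases hb2 with h2 | h2 <;> rcases hc with h3 | h3 <;>
    first
      | exact hab (h.trans h2.symm)
      | exact hac (h.trans h3.symm)
      | exact hbc (h2.trans h3.symm)

private lemma lemR {i₀ t₀ : B} {w₀ : W}
    (hw₀ : cs.length w₀ < cs.length (cs.simple i₀ * w₀))
    (hX : cs.simple i₀ * w₀ = w₀ * cs.simple t₀) :
    ∀ (n : ℕ) (v : W), cs.length v = n → cs.length v < cs.length (cs.simple i₀ * v) →
      cs.length (v⁻¹ * w₀ * cs.simple t₀) = cs.length (v⁻¹ * w₀) + 1 := by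
  intro n
  induction n using Nat.strong_induction_on with
  | _ n ih =>
    intro v hn hv
    rcases eq_or_ne v 1 with rfl | hne
    · simp only [inv_one, one_mul]
      rw [← hX]
      have := cs.length_simple_mul w₀ i₀
      omega
    · obtain ⟨s', hs'⟩ := cs.exists_rightDescent_of_ne_one hne
      have hds' : cs.length (v * cs.simple s') < cs.length v := hs'
      have hlv' : cs.length (v * cs.simple s') + 1 = cs.length v := by
        have := cs.length_mul_simple v s'
        omega
      have hv'mem : cs.length (v * cs.simple s')
          < cs.length (cs.simple i₀ * (v * cs.simple s')) := by
        have h1 : cs.simple i₀ * (v * cs.simple s') = (cs.simple i₀ * v) * cs.simple s' := by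
          rw [mul_assoc]
        have h2 := cs.length_mul_simple (cs.simple i₀ * v) s'
        rw [h1]
        omega
      have hIH := ih (cs.length (v * cs.simple s')) (by omega) (v * cs.simple s') rfl hv'mem
      have hvinv : v⁻¹ = cs.simple s' * (v * cs.simple s')⁻¹ := by
        rw [mul_inv_rev, simple_inv cs s', ← mul_assoc, cs.simple_mul_simple_self s', one_mul]
      set u := (v * cs.simple s')⁻¹ * w₀ with hu
      have hvw : v⁻¹ * w₀ = cs.simple s' * u := by rw [hvinv, hu, mul_assoc]
      rcases Nat.lt_or_ge (cs.length (cs.simple s' * u)) (cs.length u) with hcase | hcase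
      · have h1 := cs.length_simple_mul u s'
        have h2 := cs.length_simple_mul (u * cs.simple t₀) s'
        have h3 := cs.length_mul_simple (cs.simple s' * u) t₀
        have h4 : (cs.simple s' * u) * cs.simple t₀ = cs.simple s' * (u * cs.simple t₀) :=
          mul_assoc _ _ _
        rw [hvw, h4]
        rw [h4] at h3
        omega
      · have h1 := cs.length_simple_mul u s'
        have hup : cs.length (cs.simple s' * u) = cs.length u + 1 := by omega
        by_contra hcon
        rw [hvw] at hcon
        have h3 := cs.length_mul_simple (cs.simple s' * u) t₀
        have hle : cs.length (cs.simple s' * u * cs.simple t₀) ≤ cs.length u := by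
          omega
        have hfx := factX (cs := cs) hup hIH hle
        have h6 : u * cs.simple t₀ * u⁻¹ = cs.simple s' := by rw [← hfx]; group
        have hw₀conj : w₀ * cs.simple t₀ * w₀⁻¹ = cs.simple i₀ := by rw [← hX]; group
        have hss : cs.simple s' * cs.simple s' = 1 := cs.simple_mul_simple_self s'
        have hst : cs.simple t₀ = u⁻¹ * cs.simple s' * u := by
          rw [← h6]
          group
        have h9 : cs.simple i₀ * v = v * cs.simple s' := by
          have e1 : cs.simple i₀ = w₀ * cs.simple t₀ * w₀⁻¹ := hw₀conj.symm
          have e2 : w₀ * cs.simple t₀ * w₀⁻¹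
              = (v * cs.simple s') * cs.simple s' * (v * cs.simple s')⁻¹ := by
            rw [hst, hu]
            group
          rw [e1, e2, mul_inv_rev, simple_inv cs s']
          calc v * cs.simple s' * cs.simple s' * (cs.simple s' * v⁻¹) * v
              = v * (cs.simple s' * cs.simple s') * cs.simple s' * (v⁻¹ * v) := by group
            _ = v * cs.simple s' := by
                rw [hss, inv_mul_cancel]
                group
        rw [h9] at hv
        omega

/-- Let `(d 0, …, d k)` be a minimal gallery and `c` a chamber. If the apartment
`A` contains `c, d 0, …, d (k-1)` but no apartment contains `c, d 0, …, d k`, and `α` is a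
root of `A` containing `d (k-1)` but not the chamber `e ∈ A` with
`δ (d (k-1)) e = δ (d (k-1)) (d k)`, then `c ∉ α`. -/
theorem statement5 (hb : IsBuilding cs δ) (k : ℕ) (hk : 1 ≤ k) (d : ℕ → C) (c : C)
    (hgal : ∀ i < k, ∃ s : B, δ (d i) (d (i+1)) = cs.simple s)
    (hmin : cs.length (δ (d 0) (d k)) = k)
    (A : Set C) (hA : IsApartment cs δ A) (hcA : c ∈ A)
    (hdA : ∀ i < k, d i ∈ A)
    (hno : ¬ ∃ A' : Set C, IsApartment cs δ A' ∧ c ∈ A' ∧ ∀ i ≤ k, d i ∈ A')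
    (e : C) (heA : e ∈ A) (he : δ (d (k-1)) e = δ (d (k-1)) (d k))
    (α : Set C) (hα : IsRootOf cs δ A α) (hdα : d (k-1) ∈ α) (heα : e ∉ α) :
    c ∉ α := by
  intro hc
  obtain ⟨hαA, i₀, f, hbij, hiso⟩ := hα
  have hkk : k - 1 + 1 = k := by omega
  obtain ⟨t₀, ht₀⟩ := hgal (k-1) (by omega)
  rw [hkk] at ht₀
  have he' : δ (d (k-1)) e = cs.simple t₀ := by rw [he, ht₀]
  have hdk1A : d (k-1) ∈ A := hdA (k-1) (by omega)
  -- Gallery basics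
  have GB1 : ∀ j, j ≤ k → ∀ i, i ≤ j → cs.length (δ (d i) (d j)) ≤ j - i := by
    intro j
    induction j with
    | zero =>
      intro _ i hi
      have hi0 : i = 0 := by omega
      subst hi0
      rw [dist_self hb, cs.length_one]
    | succ j ih =>
      intro hjk i hij
      rcases Nat.lt_or_ge i (j+1) with h | h
      · obtain ⟨s, hs⟩ := hgal j (by omega)
        rcases hb.step (d i) (d j) (d (j+1)) s hs with h1 | h1
        · rw [h1]
          have := ih (by omega) i (by omega)
          omega
        · rw [h1]
          have h2 := cs.length_mul_le (δ (d i) (d j)) (cs.simple s)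
          rw [cs.length_simple] at h2
          have := ih (by omega) i (by omega)
          omega
      · have hi1 : i = j + 1 := by omega
        subst hi1
        rw [dist_self hb, cs.length_one]
        omega
  have GB0 : ∀ j, j ≤ k → cs.length (δ (d 0) (d j)) = j := by
    have aux : ∀ m j, j + m ≤ k →
        cs.length (δ (d 0) (d (j + m))) ≤ cs.length (δ (d 0) (d j)) + m := by
      intro m
      induction m with
      | zero => intro j _; simp
      | succ m ih =>
        intro j hjm
        have h1 := ih (j+1) (by omega)
        obtain ⟨s, hs⟩ := hgal j (by omega)
        have h2 : cs.length (δ (d 0) (d (j+1))) ≤ cs.length (δ (d 0) (d j)) + 1 := by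
          rcases hb.step (d 0) (d j) (d (j+1)) s hs with h3 | h3
          · rw [h3]; omega
          · rw [h3]
            have := cs.length_mul_le (δ (d 0) (d j)) (cs.simple s)
            rw [cs.length_simple] at this
            omega
        have hrw : j + (m+1) = (j+1) + m := by omega
        rw [hrw]
        omega
    intro j hj
    have h1 := GB1 j hj 0 (by omega)
    have h2 := aux (k - j) j (by omega)
    rw [show j + (k - j) = k by omega] at h2
    rw [hmin] at h2
    omega
  have GBm : ∀ i, i ≤ k → ∀ j, i ≤ j → j ≤ k →
      δ (d i) (d j) = (δ (d 0) (d i))⁻¹ * δ (d 0) (d j) := by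
    intro i hik j
    induction j with
    | zero =>
      intro hij _
      have hi0 : i = 0 := by omega
      subst hi0
      rw [dist_self hb, inv_mul_cancel]
    | succ j ihj =>
      intro hij hjk
      rcases Nat.lt_or_ge i (j+1) with h | h
      · have hij' : i ≤ j := by omega
        have IH := ihj hij' (by omega)
        obtain ⟨s, hs⟩ := hgal j (by omega)
        have h0 : δ (d 0) (d (j+1)) = δ (d 0) (d j) * cs.simple s := by
          rcases hb.step (d 0) (d j) (d (j+1)) s hs with h1 | h1
          · exfalso
            have e1 := GB0 j (by omega)
            have e2 := GB0 (j+1) (by omega)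
            rw [h1] at e2
            omega
          · exact h1
        have len1 : cs.length ((δ (d 0) (d i))⁻¹ * δ (d 0) (d j)) = j - i := by
          have hle := GB1 j (by omega) i hij'
          rw [IH] at hle
          have h5 : δ (d 0) (d i) * ((δ (d 0) (d i))⁻¹ * δ (d 0) (d j)) = δ (d 0) (d j) := by
            group
          have h4 := cs.length_mul_le (δ (d 0) (d i)) ((δ (d 0) (d i))⁻¹ * δ (d 0) (d j))
          rw [h5, GB0 j (by omega), GB0 i (by omega)] at h4
          omega
        have len2 : cs.length ((δ (d 0) (d i))⁻¹ * δ (d 0) (d (j+1))) = j + 1 - i := by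
          have hup : cs.length ((δ (d 0) (d i))⁻¹ * δ (d 0) (d (j+1))) ≤ j + 1 - i := by
            rw [h0, ← mul_assoc]
            have hh := cs.length_mul_le ((δ (d 0) (d i))⁻¹ * δ (d 0) (d j)) (cs.simple s)
            rw [cs.length_simple, len1] at hh
            omega
          have h5 : δ (d 0) (d i) * ((δ (d 0) (d i))⁻¹ * δ (d 0) (d (j+1))) = δ (d 0) (d (j+1)) := by
            group
          have h4 := cs.length_mul_le (δ (d 0) (d i)) ((δ (d 0) (d i))⁻¹ * δ (d 0) (d (j+1)))
          rw [h5, GB0 (j+1) (by omega), GB0 i (by omega)] at h4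
          omega
        have hforce := hb.step_of_length (d i) (d j) (d (j+1)) s hs (by
          rw [IH]
          have hrw : (δ (d 0) (d i))⁻¹ * δ (d 0) (d j) * cs.simple s
              = (δ (d 0) (d i))⁻¹ * δ (d 0) (d (j+1)) := by
            rw [h0, mul_assoc]
          rw [hrw, len1, len2]
          omega)
        rw [hforce, IH, h0, mul_assoc]
      · have hi1 : i = j + 1 := by omega
        subst hi1
        rw [dist_self hb]
        exact (inv_mul_cancel _).symm
  -- N1 : the mirror of w₀ is not in the halfspace
  have hw0 : cs.length (f (d (k-1))) < cs.length (cs.simple i₀ * f (d (k-1))) := hbij.1 hdα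
  have hN1 : ¬ cs.length (f (d (k-1)) * cs.simple t₀)
      < cs.length (cs.simple i₀ * (f (d (k-1)) * cs.simple t₀)) := by
    intro hmem
    obtain ⟨y, hyα, hfy⟩ := hbij.2.2 hmem
    have hy : δ (d (k-1)) y = cs.simple t₀ := by
      rw [hiso _ hdα _ hyα, hfy]
      group
    have hyne1 : y ≠ d (k-1) := by
      intro h1
      rw [h1, dist_self hb] at hy
      exact simple_ne_one t₀ hy.symm
    have hyne2 : y ≠ e := fun h1 => heα (h1 ▸ hyα)
    have hene : e ≠ d (k-1) := by
      intro h1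
      rw [h1, dist_self hb] at he'
      exact simple_ne_one t₀ he'.symm
    have hmm := hA.2.2 (residue cs δ {t₀} (d (k-1))) ⟨t₀, d (k-1), rfl⟩
      ⟨d (k-1), mem_residue_singleton.mpr (Or.inl (dist_self hb _)), hdk1A⟩
    obtain ⟨u, v, huv, hQ⟩ := Set.ncard_eq_two.mp hmm
    have hin : ∀ z : C, z ∈ residue cs δ {t₀} (d (k-1)) ∩ A → z = u ∨ z = v := by
      intro z hz
      have hz2 := hQ ▸ hz
      simpa using hz2
    exact three_distinct_not_pair (a := d (k-1)) (b := e) (c := y)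
      (Ne.symm hene) (Ne.symm hyne1) (Ne.symm hyne2)
      (hin _ ⟨mem_residue_singleton.mpr (Or.inl (dist_self hb _)), hdk1A⟩)
      (hin _ ⟨mem_residue_singleton.mpr (Or.inr he'), heA⟩)
      (hin _ ⟨mem_residue_singleton.mpr (Or.inr hy), hαA hyα⟩)
  -- N2
  have hsi : cs.length (cs.simple i₀ * f (d (k-1))) = cs.length (f (d (k-1))) + 1 := by
    have := cs.length_simple_mul (f (d (k-1))) i₀
    omega
  have hts : cs.length (f (d (k-1)) * cs.simple t₀) = cs.length (f (d (k-1))) + 1 := by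
    have h2 := cs.length_mul_simple (f (d (k-1))) t₀
    have h3 := cs.length_mul_simple (cs.simple i₀ * f (d (k-1))) t₀
    have h5 : cs.simple i₀ * (f (d (k-1)) * cs.simple t₀)
        = cs.simple i₀ * f (d (k-1)) * cs.simple t₀ := by rw [mul_assoc]
    rw [h5] at hN1
    omega
  have hle3 : cs.length (cs.simple i₀ * f (d (k-1)) * cs.simple t₀)
      ≤ cs.length (f (d (k-1))) := by
    have h4 := cs.length_simple_mul (f (d (k-1)) * cs.simple t₀) i₀
    have h5 : cs.simple i₀ * (f (d (k-1)) * cs.simple t₀)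
        = cs.simple i₀ * f (d (k-1)) * cs.simple t₀ := by rw [mul_assoc]
    rw [h5] at h4 hN1
    omega
  have hX := factX (cs := cs) hsi hts hle3
  have hR := lemR (cs := cs) hw0 hX
  -- pin δ c (d k)
  have hfc : cs.length (f c) < cs.length (cs.simple i₀ * f c) := hbij.1 hc
  have hcd : δ c (d (k-1)) = (f c)⁻¹ * f (d (k-1)) := hiso c hc _ hdα
  have hcdk : δ c (d k) = δ c (d (k-1)) * cs.simple t₀ := by
    apply hb.step_of_length c (d (k-1)) (d k) t₀ ht₀
    rw [hcd]
    exact hR (cs.length (f c)) (f c) rfl hfc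
  -- the seed isometric set
  set seed : Set (W × C) := {q : W × C |
    (∃ i, i < k ∧ q = (δ (d (k-1)) (d i), d i)) ∨ q = (δ (d (k-1)) c, c)
      ∨ q = (cs.simple t₀, d k)} with hseed
  have hAmul : ∀ x ∈ A, ∀ y ∈ A, δ x y = (δ (d (k-1)) x)⁻¹ * δ (d (k-1)) y := by
    intro x hx y hy
    rw [apartment_mul hb hA hx hdk1A hy, dist_symm hb (d (k-1)) x]
  have hdkpin : ∀ x : C, ((∃ i, i < k ∧ x = d i) ∨ x = c) →
      δ x (d k) = (δ (d (k-1)) x)⁻¹ * cs.simple t₀ := by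
    rintro x (⟨i, hik, rfl⟩ | hxc)
    · have h1 : δ (d i) (d k) = (δ (d 0) (d i))⁻¹ * δ (d 0) (d k) :=
        GBm i (by omega) k (by omega) (by omega)
      have h3 : δ (d (k-1)) (d k) = (δ (d 0) (d (k-1)))⁻¹ * δ (d 0) (d k) :=
        GBm (k-1) (by omega) k (by omega) (by omega)
      rw [ht₀] at h3
      have h4 : δ (d 0) (d k) = δ (d 0) (d (k-1)) * cs.simple t₀ := by
        rw [h3]
        group
      rw [h1, dist_symm hb (d i) (d (k-1)),
        GBm i (by omega) (k-1) (by omega) (by omega), h4]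
      group
    · rw [hxc, hcdk, dist_symm hb (d (k-1)) c]
  have hseedisom : IsIsomSet δ seed := by
    rintro p hp q hq
    simp only [hseed, Set.mem_setOf_eq] at hp hq
    obtain (⟨i1, hi1, rfl⟩ | rfl | rfl) := hp <;> obtain (⟨i2, hi2, rfl⟩ | rfl | rfl) := hq
    · exact hAmul _ (hdA i1 hi1) _ (hdA i2 hi2)
    · exact hAmul _ (hdA i1 hi1) _ hcA
    · exact hdkpin _ (Or.inl ⟨i1, hi1, rfl⟩)
    · exact hAmul _ hcA _ (hdA i2 hi2)
    · exact hAmul _ hcA _ hcA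
    · exact hdkpin _ (Or.inr rfl)
    · show δ (d k) (d i2) = (cs.simple t₀)⁻¹ * δ (d (k-1)) (d i2)
      rw [dist_symm hb (d i2) (d k), hdkpin _ (Or.inl ⟨i2, hi2, rfl⟩), mul_inv_rev, inv_inv]
    · show δ (d k) c = (cs.simple t₀)⁻¹ * δ (d (k-1)) c
      rw [dist_symm hb c (d k), hdkpin _ (Or.inr rfl), mul_inv_rev, inv_inv]
    · show δ (d k) (d k) = (cs.simple t₀)⁻¹ * cs.simple t₀
      rw [dist_self hb, inv_mul_cancel]
  have hseedne : seed.Nonempty := ⟨(cs.simple t₀, d k), Or.inr (Or.inr rfl)⟩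
  obtain ⟨F, hF, hFfix⟩ := exists_total hb hseedisom hseedne
  apply hno
  refine ⟨Set.range F, range_F_apartment hb hF, ?_, ?_⟩
  · have hfix := hFfix (δ (d (k-1)) c, c) (Or.inr (Or.inl rfl))
    exact ⟨_, hfix⟩
  · intro i hik
    rcases Nat.lt_or_ge i k with h | h
    · have hfix := hFfix (δ (d (k-1)) (d i), d i) (Or.inl ⟨i, h, rfl⟩)
      exact ⟨_, hfix⟩
    · have hfix := hFfix (cs.simple t₀, d k) (Or.inr (Or.inr rfl))
      have hik' : i = k := by omega
      rw [hik']
      exact ⟨_, hfix⟩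

end BldgPaper
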